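/- arXiv:1004.1326 — 2 statements merged into one kernel-verified Lean document; each statement's English description precedes it below -/
import Mathlib

section
/- Let ξ be irrational with convergents p_k/q_k, and y = (y₁,y₂) with y₂ ≠ 0, rational slope a/b in lowest terms with |a| ≤ b. Let k be a positive integer with q_k ≥ 12b/|y₂|. Then every γ ∈ SL(2,ℤ) with |γ| ≤ (|y₂|/4) q_k q_{k+1} satisfies |γ(ξ,1)ᵀ − y| ≥ 1/(4 b q_k). -/
open Matrix MeasureTheory

/-- Denominator `q k` of the `k`-th convergent of the continued fraction of `ξ`. -/
noncomputable def qden (ξ : ℝ) (k : ℕ) : ℝ := (GenContFract.of ξ).dens k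

/-- Numerator `p k` of the `k`-th convergent of the continued fraction of `ξ`. -/
noncomputable def pnum (ξ : ℝ) (k : ℕ) : ℝ := (GenContFract.of ξ).nums k

/-- Action of an integer matrix on `ℝ²` by left multiplication. -/
noncomputable def act (g : Matrix (Fin 2) (Fin 2) ℤ) (x : Fin 2 → ℝ) : Fin 2 → ℝ :=
  (g.map (Int.cast : ℤ → ℝ)).mulVec x

/-- Sup norm of an integer `2 × 2` matrix. -/
noncomputable def mnorm (g : Matrix (Fin 2) (Fin 2) ℤ) : ℝ :=
  max (max |(g 0 0 : ℝ)| |(g 0 1 : ℝ)|) (max |(g 1 0 : ℝ)| |(g 1 1 : ℝ)|)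

/-- Sup norm on `ℝ²`. -/
noncomputable def vnorm (v : Fin 2 → ℝ) : ℝ := max |v 0| |v 1|

/-- The set of exponents `w` such that `|v α + u| ≤ |v| ^ (-w)` has infinitely many
integer solutions `(v, u)`; its supremum is the irrationality measure `ω(α)`. -/
def omegaSet (α : ℝ) : Set ℝ :=
  {w : ℝ | {p : ℤ × ℤ | |(p.1 : ℝ) * α + (p.2 : ℝ)| ≤ |(p.1 : ℝ)| ^ (-w)}.Infinite}

/-- The set of exponents `μ` such that `|γ x - y| ≤ |γ| ^ (-μ)` for infinitely many
`γ ∈ SL(2, ℤ)`; its supremum is `μ(x, y)`. -/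
def muSet (x y : Fin 2 → ℝ) : Set ℝ :=
  {μ : ℝ | {γ : Matrix (Fin 2) (Fin 2) ℤ |
    γ.det = 1 ∧ vnorm (act γ x - y) ≤ mnorm γ ^ (-μ)}.Infinite}

/-- The set of exponents `μ` such that for all sufficiently large `T` there is
`γ ∈ SL(2, ℤ)` with `|γ| ≤ T` and `|γ x - y| ≤ T ^ (-μ)`; its supremum is `μ̂(x, y)`. -/
def muHatSet (x y : Fin 2 → ℝ) : Set ℝ :=
  {μ : ℝ | ∃ T₀ : ℝ, ∀ T : ℝ, T₀ ≤ T → ∃ γ : Matrix (Fin 2) (Fin 2) ℤ,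
    γ.det = 1 ∧ mnorm γ ≤ T ∧ vnorm (act γ x - y) ≤ T ^ (-μ)}

variable {ξ : ℝ}

theorem myNT (hξ : Irrational ξ) (n : ℕ) : ¬(GenContFract.of ξ).TerminatedAt n := by
  intro h
  obtain ⟨q, hq⟩ := GenContFract.exists_rat_eq_of_terminates ⟨n, h⟩
  exact hξ ⟨q, hq.symm⟩

theorem myS (hξ : Irrational ξ) (n : ℕ) :
    ∃ z : ℤ, 1 ≤ z ∧ (GenContFract.of ξ).s.get? n = some ⟨1, (z : ℝ)⟩ := by
  have h := myNT hξ n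
  rw [GenContFract.terminatedAt_iff_s_none] at h
  obtain ⟨gp, hgp⟩ := Option.ne_none_iff_exists'.1 h
  obtain ⟨ha, z, hz⟩ := GenContFract.of_partNum_eq_one_and_exists_int_partDen_eq hgp
  have hb1 : (1 : ℝ) ≤ gp.b :=
    GenContFract.of_one_le_get?_partDen (GenContFract.partDen_eq_s_b hgp)
  refine ⟨z, by exact_mod_cast hz ▸ hb1, ?_⟩
  obtain ⟨ga, gb⟩ := gp
  simp only at ha hz
  rw [hgp, ha, hz]

theorem myQone (hξ : Irrational ξ) (n : ℕ) : 1 ≤ qden ξ n := by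
  have h : ((Nat.fib (n + 1) : ℝ)) ≤ (GenContFract.of ξ).dens n :=
    GenContFract.succ_nth_fib_le_of_nth_den
      (by rcases n with _ | n
          · exact Or.inl rfl
          · exact Or.inr (myNT hξ n))
  have h1 : (1 : ℝ) ≤ (Nat.fib (n + 1) : ℝ) := by
    exact_mod_cast Nat.one_le_iff_ne_zero.mpr (Nat.fib_pos.mpr n.succ_pos).ne'
  exact le_trans h1 h

theorem myQpos (hξ : Irrational ξ) (n : ℕ) : 0 < qden ξ n :=
  lt_of_lt_of_le one_pos (myQone hξ n)

theorem myQmono (n : ℕ) : qden ξ n ≤ qden ξ (n + 1) := GenContFract.of_den_mono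

theorem myQrec (hξ : Irrational ξ) (n : ℕ) :
    qden ξ n + qden ξ (n + 1) ≤ qden ξ (n + 2) := by
  obtain ⟨z, hz1, hzs⟩ := myS hξ (n + 1)
  have hrec := GenContFract.dens_recurrence hzs rfl rfl
  have : qden ξ (n + 2) = (z : ℝ) * qden ξ (n + 1) + 1 * qden ξ n := hrec
  rw [this]
  have hz1' : (1 : ℝ) ≤ (z : ℝ) := by exact_mod_cast hz1
  nlinarith [myQpos hξ (n + 1), myQpos hξ n]

theorem myInt (hξ : Irrational ξ) (n : ℕ) :
    ((∃ p : ℤ, pnum ξ n = p) ∧ (∃ q : ℤ, qden ξ n = q)) ∧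
    ((∃ p : ℤ, pnum ξ (n + 1) = p) ∧ (∃ q : ℤ, qden ξ (n + 1) = q)) := by
  induction n with
  | zero =>
    obtain ⟨z, hz1, hzs⟩ := myS hξ 0
    refine ⟨⟨⟨⌊ξ⌋, ?_⟩, ⟨1, ?_⟩⟩, ⟨⟨z * ⌊ξ⌋ + 1, ?_⟩, ⟨z, ?_⟩⟩⟩
    · show (GenContFract.of ξ).nums 0 = _
      rw [GenContFract.zeroth_num_eq_h, GenContFract.of_h_eq_floor]
    · show (GenContFract.of ξ).dens 0 = _
      rw [GenContFract.zeroth_den_eq_one]; norm_num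
    · show (GenContFract.of ξ).nums 1 = _
      rw [GenContFract.first_num_eq hzs, GenContFract.of_h_eq_floor]
      push_cast; ring
    · show (GenContFract.of ξ).dens 1 = _
      rw [GenContFract.first_den_eq hzs]
  | succ n ih =>
    obtain ⟨⟨⟨p0, hp0⟩, ⟨q0, hq0⟩⟩, ⟨p1, hp1⟩, ⟨q1, hq1⟩⟩ := ih
    obtain ⟨z, hz1, hzs⟩ := myS hξ (n + 1)
    refine ⟨⟨⟨p1, hp1⟩, ⟨q1, hq1⟩⟩, ⟨z * p1 + p0, ?_⟩, ⟨z * q1 + q0, ?_⟩⟩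
    · show (GenContFract.of ξ).nums (n + 2) = _
      rw [GenContFract.nums_recurrence hzs hp0 hp1]
      show (z : ℝ) * (p1 : ℝ) + 1 * (p0 : ℝ) = _
      push_cast; ring
    · show (GenContFract.of ξ).dens (n + 2) = _
      rw [GenContFract.dens_recurrence hzs hq0 hq1]
      show (z : ℝ) * (q1 : ℝ) + 1 * (q0 : ℝ) = _
      push_cast; ring

theorem myDet (hξ : Irrational ξ) (n : ℕ) :
    pnum ξ n * qden ξ (n + 1) - qden ξ n * pnum ξ (n + 1) = (-1) ^ (n + 1) := by
  have h := SimpContFract.determinant (s := ⟨GenContFract.of ξ, GenContFract.of_isSimpContFract ξ⟩)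
    (n := n) (myNT hξ n)
  exact h

theorem myThetaLe (hξ : Irrational ξ) (n : ℕ) :
    |qden ξ n * ξ - pnum ξ n| ≤ 1 / qden ξ (n + 1) := by
  have h := GenContFract.abs_sub_convs_le (v := ξ) (n := n) (myNT hξ n)
  rw [GenContFract.conv_eq_num_div_den] at h
  have hq : 0 < qden ξ n := myQpos hξ n
  have hq1 : 0 < qden ξ (n + 1) := myQpos hξ (n + 1)
  have hqne : (GenContFract.of ξ).dens n ≠ 0 := ne_of_gt hq
  have key : qden ξ n * ξ - pnum ξ n =
      qden ξ n * (ξ - (GenContFract.of ξ).nums n / (GenContFract.of ξ).dens n) := by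
    show (GenContFract.of ξ).dens n * ξ - (GenContFract.of ξ).nums n = (GenContFract.of ξ).dens n * _
    field_simp
  rw [key, abs_mul, abs_of_pos hq]
  calc qden ξ n * |ξ - (GenContFract.of ξ).nums n / (GenContFract.of ξ).dens n|
      ≤ qden ξ n * (1 / ((GenContFract.of ξ).dens n * (GenContFract.of ξ).dens (n + 1))) :=
        mul_le_mul_of_nonneg_left h hq.le
    _ = 1 / qden ξ (n + 1) := by
        show (GenContFract.of ξ).dens n * _ = _
        rw [mul_one_div, div_mul_eq_div_div, div_self hqne]
        rfl

theorem myThetaNe (hξ : Irrational ξ) (n : ℕ) : qden ξ n * ξ - pnum ξ n ≠ 0 := by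
  obtain ⟨⟨⟨p, hp⟩, ⟨q, hq⟩⟩, -⟩ := myInt hξ n
  rw [hp, hq]
  intro h
  have hqpos : (0 : ℝ) < q := hq ▸ myQpos hξ n
  have hq0 : (q : ℝ) ≠ 0 := ne_of_gt hqpos
  apply hξ
  exact ⟨(p : ℚ) / (q : ℚ), by push_cast; field_simp; linarith [h]⟩

theorem habs (x y : ℝ) (h : 0 ≤ x * y) : |x| ≤ |x + y| := by
  rcases le_or_gt 0 x with hx | hx <;> rcases le_or_gt 0 y with hy | hy
  · rw [abs_of_nonneg hx, abs_of_nonneg (by linarith)]; linarith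
  · nlinarith [abs_nonneg (x+y), le_abs_self (x+y), neg_abs_le (x+y), abs_of_nonneg hx]
  · nlinarith [le_abs_self (x+y), neg_abs_le (x+y), abs_of_neg hx]
  · rw [abs_of_neg hx, abs_of_neg (by linarith)]; linarith

theorem myDecompZ (p0 q0 p1 q1 P Q d : ℤ) (hd : p0 * q1 - q0 * p1 = d)
    (hd1 : d = 1 ∨ d = -1) : ∃ u v : ℤ, P = u * q0 + v * q1 ∧ Q = -(u * p0 + v * p1) := by
  rcases hd1 with rfl | h
  · exact ⟨-(p1 * P + q1 * Q), p0 * P + q0 * Q, by linear_combination (-P) * hd,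
      by linear_combination (-Q) * hd⟩
  · rw [h] at hd
    exact ⟨p1 * P + q1 * Q, -(p0 * P + q0 * Q), by linear_combination P * hd,
      by linear_combination Q * hd⟩

theorem myE (hξ : Irrational ξ) (n : ℕ) :
    |qden ξ (n + 1) * (qden ξ n * ξ - pnum ξ n) -
      qden ξ n * (qden ξ (n + 1) * ξ - pnum ξ (n + 1))| = 1 := by
  have hd := myDet hξ n
  have : qden ξ (n + 1) * (qden ξ n * ξ - pnum ξ n) -
      qden ξ n * (qden ξ (n + 1) * ξ - pnum ξ (n + 1)) = -(-1 : ℝ) ^ (n + 1) := by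
    linear_combination -hd
  rw [this, abs_neg, abs_pow, abs_neg, abs_one, one_pow]

theorem myThetaSign (hξ : Irrational ξ) (n : ℕ) :
    (qden ξ n * ξ - pnum ξ n) * (qden ξ (n + 1) * ξ - pnum ξ (n + 1)) < 0 := by
  set t0 := qden ξ n * ξ - pnum ξ n with ht0
  set t1 := qden ξ (n + 1) * ξ - pnum ξ (n + 1) with ht1
  rcases lt_trichotomy (t0 * t1) 0 with h | h | h
  · exact h
  · exact absurd (mul_eq_zero.1 h)
      (by push_neg; exact ⟨myThetaNe hξ n, myThetaNe hξ (n + 1)⟩)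
  exfalso
  have hq0 := myQpos hξ n
  have hq1 := myQpos hξ (n + 1)
  have hq2 := myQpos hξ (n + 2)
  have hx : qden ξ (n + 1) * |t0| ≤ 1 := by
    calc qden ξ (n + 1) * |t0| ≤ qden ξ (n + 1) * (1 / qden ξ (n + 1)) :=
          mul_le_mul_of_nonneg_left (myThetaLe hξ n) hq1.le
      _ = 1 := by field_simp
  have hy : qden ξ n * |t1| < 1 := by
    have h1 : qden ξ n * |t1| ≤ qden ξ n * (1 / qden ξ (n + 2)) :=
      mul_le_mul_of_nonneg_left (myThetaLe hξ (n + 1)) hq0.le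
    have h2 : qden ξ n * (1 / qden ξ (n + 2)) < 1 := by
      rw [mul_one_div, div_lt_one hq2]
      linarith [myQrec hξ n, hq1]
    linarith
  have hE := myE hξ n
  rw [← ht0, ← ht1] at hE
  rcases mul_pos_iff.1 h with ⟨h0, h1⟩ | ⟨h0, h1⟩
  · rw [abs_of_pos h0] at hx
    rw [abs_of_pos h1] at hy
    rcases abs_eq (by norm_num : (0:ℝ) ≤ 1) |>.1 hE with hE1 | hE1 <;>
      nlinarith [mul_pos hq1 h0, mul_pos hq0 h1]
  · rw [abs_of_neg h0] at hx
    rw [abs_of_neg h1] at hy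
    rcases abs_eq (by norm_num : (0:ℝ) ≤ 1) |>.1 hE with hE1 | hE1 <;>
      nlinarith [mul_neg_of_pos_of_neg hq1 h0, mul_neg_of_pos_of_neg hq0 h1]

theorem myThetaLow (hξ : Irrational ξ) (n : ℕ) :
    1 / (qden ξ n + qden ξ (n + 1)) ≤ |qden ξ n * ξ - pnum ξ n| := by
  set t0 := qden ξ n * ξ - pnum ξ n with ht0
  set t1 := qden ξ (n + 1) * ξ - pnum ξ (n + 1) with ht1
  have hq0 := myQpos hξ n
  have hq1 := myQpos hξ (n + 1)
  have hq2 := myQpos hξ (n + 2)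
  have hS : 0 < qden ξ n + qden ξ (n + 1) := by linarith
  have hE := myE hξ n
  rw [← ht0, ← ht1] at hE
  have h1 : 1 ≤ qden ξ (n + 1) * |t0| + qden ξ n * |t1| := by
    calc (1:ℝ) = |qden ξ (n + 1) * t0 - qden ξ n * t1| := hE.symm
      _ ≤ |qden ξ (n + 1) * t0| + |qden ξ n * t1| := abs_sub _ _
      _ = qden ξ (n + 1) * |t0| + qden ξ n * |t1| := by
          rw [abs_mul, abs_mul, abs_of_pos hq1, abs_of_pos hq0]
  have h2 : qden ξ n * |t1| ≤ qden ξ n * (1 / qden ξ (n + 2)) :=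
    mul_le_mul_of_nonneg_left (myThetaLe hξ (n + 1)) hq0.le
  have h3 : qden ξ n * (1 / qden ξ (n + 2)) ≤ qden ξ n / (qden ξ n + qden ξ (n + 1)) := by
    rw [mul_one_div]
    exact div_le_div_of_nonneg_left hq0.le hS (myQrec hξ n)
  rw [div_le_iff₀ hS]
  have h4 : qden ξ n / (qden ξ n + qden ξ (n + 1)) * (qden ξ n + qden ξ (n + 1)) = qden ξ n :=
    div_mul_cancel₀ _ hS.ne'
  nlinarith [abs_nonneg t0, mul_pos hq1 hS]


set_option maxHeartbeats 1000000

/-- Theorem 4: if `q_k ≥ 12 b / |y₂|`, then every `γ ∈ SL(2, ℤ)` with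
`|γ| ≤ (|y₂|/4) q_k q_{k+1}` satisfies `|γ (ξ, 1)ᵀ - y| ≥ 1/(4 b q_k)`. -/
theorem stmt16 (ξ : ℝ) (hξ : Irrational ξ) (y : Fin 2 → ℝ) (hy2 : y 1 ≠ 0)
    (a b : ℤ) (hab : IsCoprime a b) (hb : 0 < b) (hab' : |a| ≤ b)
    (hslope : y 0 * (b : ℝ) = y 1 * (a : ℝ))
    (k : ℕ) (hk : 1 ≤ k) (hqk : 12 * (b : ℝ) / |y 1| ≤ qden ξ k)
    (γ : Matrix (Fin 2) (Fin 2) ℤ) (hγ : γ.det = 1)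
    (hn : mnorm γ ≤ (|y 1| / 4) * qden ξ k * qden ξ (k + 1)) :
    1 / (4 * (b : ℝ) * qden ξ k) ≤ vnorm (act γ ![ξ, 1] - y) := by
  by_contra hcon
  push_neg at hcon
  obtain ⟨m, rfl⟩ : ∃ m, k = m + 1 := ⟨k - 1, (Nat.succ_pred_eq_of_pos hk).symm⟩
  have em2 : m + 1 + 1 = m + 2 := rfl
  rw [em2] at hn
  -- basic positivity
  have hy1 : (0 : ℝ) < |y 1| := abs_pos.2 hy2
  have hbR : (0 : ℝ) < (b : ℝ) := by exact_mod_cast hb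
  have hbR1 : (1 : ℝ) ≤ (b : ℝ) := by exact_mod_cast hb
  have habR : |(a : ℝ)| ≤ (b : ℝ) := by exact_mod_cast hab'
  have hq0p : 0 < qden ξ m := myQpos hξ m
  have hqkp : 0 < qden ξ (m + 1) := myQpos hξ (m + 1)
  have hqk1p : 0 < qden ξ (m + 2) := myQpos hξ (m + 2)
  have hq0k : qden ξ m ≤ qden ξ (m + 1) := myQmono m
  have hqkk1 : qden ξ (m + 1) ≤ qden ξ (m + 2) := myQmono (m + 1)
  -- matrix entries
  set A := γ 0 0 with hA_def
  set B := γ 0 1 with hB_def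
  set C := γ 1 0 with hC_def
  set D := γ 1 1 with hD_def
  have hγZ : A * D - B * C = 1 := by
    rw [Matrix.det_fin_two] at hγ; exact hγ
  have hdetR : (A : ℝ) * D - B * C = 1 := by exact_mod_cast hγZ
  -- action coordinates
  have hact0 : act γ ![ξ, 1] 0 = (A : ℝ) * ξ + B := by
    simp [act, Matrix.mulVec, dotProduct, Fin.sum_univ_two, Matrix.map_apply, hA_def, hB_def]
  have hact1 : act γ ![ξ, 1] 1 = (C : ℝ) * ξ + D := by
    simp [act, Matrix.mulVec, dotProduct, Fin.sum_univ_two, Matrix.map_apply, hC_def, hD_def]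
  set δ := vnorm (act γ ![ξ, 1] - y) with hδ_def
  have hδ0 : 0 ≤ δ := le_trans (abs_nonneg _) (le_max_left _ _)
  set e0 : ℝ := (A : ℝ) * ξ + B - y 0 with he0_def
  set e1 : ℝ := (C : ℝ) * ξ + D - y 1 with he1_def
  have he0 : |e0| ≤ δ := by
    have h : (act γ ![ξ, 1] - y) 0 = e0 := by
      rw [Pi.sub_apply, hact0]
    calc |e0| = |(act γ ![ξ, 1] - y) 0| := by rw [h]
      _ ≤ δ := le_max_left _ _
  have he1 : |e1| ≤ δ := by
    have h : (act γ ![ξ, 1] - y) 1 = e1 := by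
      rw [Pi.sub_apply, hact1]
    calc |e1| = |(act γ ![ξ, 1] - y) 1| := by rw [h]
      _ ≤ δ := le_max_right _ _
  set T := |y 1| / 4 * qden ξ (m + 1) * qden ξ (m + 2) with hT_def
  have hTpos : 0 < T := by positivity
  have hAT : |(A : ℝ)| ≤ T := le_trans (le_trans (le_max_left _ _) (le_max_left _ _)) hn
  have hCT : |(C : ℝ)| ≤ T := le_trans (le_trans (le_max_left _ _) (le_max_right _ _)) hn
  -- the integer pair (P, Q)
  set P := b * A - a * C with hP_def
  set Q := b * B - a * D with hQ_def
  have hcop : IsCoprime P Q := by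
    obtain ⟨xx, yy, hxy⟩ := hab
    refine ⟨xx * B + yy * D, -(xx * A + yy * C), ?_⟩
    rw [hP_def, hQ_def]
    linear_combination (xx * a + yy * b) * hγZ + hxy
  have hPQx : (P : ℝ) * ξ + Q = b * e0 - a * e1 := by
    rw [he0_def, he1_def, hP_def, hQ_def]
    push_cast
    linear_combination hslope
  have hPQsmall : |(P : ℝ) * ξ + Q| ≤ 2 * b * δ := by
    rw [hPQx]
    calc |(b : ℝ) * e0 - a * e1| ≤ |(b : ℝ) * e0| + |(a : ℝ) * e1| := abs_sub _ _
      _ = (b : ℝ) * |e0| + |(a : ℝ)| * |e1| := by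
          rw [abs_mul, abs_mul, abs_of_pos hbR]
      _ ≤ (b : ℝ) * δ + (b : ℝ) * δ := by
          have h1 : (b : ℝ) * |e0| ≤ (b : ℝ) * δ := mul_le_mul_of_nonneg_left he0 hbR.le
          have h2 : |(a : ℝ)| * |e1| ≤ (b : ℝ) * δ :=
            mul_le_mul habR he1 (abs_nonneg _) hbR.le
          linarith
      _ = 2 * b * δ := by ring
  have h2b : 2 * (b : ℝ) * δ < 1 / (2 * qden ξ (m + 1)) := by
    have h1 : 2 * (b : ℝ) * δ < 2 * b * (1 / (4 * b * qden ξ (m + 1))) :=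
      mul_lt_mul_of_pos_left hcon (by positivity)
    have h2 : 2 * (b : ℝ) * (1 / (4 * b * qden ξ (m + 1))) = 1 / (2 * qden ξ (m + 1)) := by
      field_simp
      ring
    linarith
  -- determinant identity with y
  have hE2 : y 1 * (P : ℝ) = b * (1 - ((A : ℝ) * e1 - (C : ℝ) * e0)) := by
    rw [he0_def, he1_def, hP_def]
    push_cast
    linear_combination (b : ℝ) * hdetR + (C : ℝ) * hslope
  have hEbd : |(A : ℝ) * e1 - (C : ℝ) * e0| ≤ 2 * T * δ := by
    calc |(A : ℝ) * e1 - (C : ℝ) * e0| ≤ |(A : ℝ) * e1| + |(C : ℝ) * e0| := abs_sub _ _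
      _ = |(A : ℝ)| * |e1| + |(C : ℝ)| * |e0| := by rw [abs_mul, abs_mul]
      _ ≤ T * δ + T * δ := by
          have h1 : |(A : ℝ)| * |e1| ≤ T * δ := mul_le_mul hAT he1 (abs_nonneg _) hTpos.le
          have h2 : |(C : ℝ)| * |e0| ≤ T * δ := mul_le_mul hCT he0 (abs_nonneg _) hTpos.le
          linarith
      _ = 2 * T * δ := by ring
  clear_value A B C D δ e0 e1 T P Q
  -- integer values of numerators and denominators
  obtain ⟨⟨⟨pz0, hp0⟩, ⟨qz0, hq0⟩⟩, ⟨pz1, hp1⟩, ⟨qz1, hq1⟩⟩ := myInt hξ m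
  obtain ⟨-, ⟨pz2, hp2⟩, ⟨qz2, hq2⟩⟩ := myInt hξ (m + 1)
  have hqz0R : (1 : ℝ) ≤ (qz0 : ℝ) := hq0 ▸ myQone hξ m
  have hqz1R : (1 : ℝ) ≤ (qz1 : ℝ) := hq1 ▸ myQone hξ (m + 1)
  have hqz2R : (1 : ℝ) ≤ (qz2 : ℝ) := hq2 ▸ myQone hξ (m + 2)
  have hqz0 : 1 ≤ qz0 := by exact_mod_cast hqz0R
  have hqz1 : 1 ≤ qz1 := by exact_mod_cast hqz1R
  have hqz2 : 1 ≤ qz2 := by exact_mod_cast hqz2R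
  have hqz01 : qz0 ≤ qz1 := by
    have : (qz0 : ℝ) ≤ (qz1 : ℝ) := by rw [← hq0, ← hq1]; exact hq0k
    exact_mod_cast this
  have hqz12 : qz1 ≤ qz2 := by
    have : (qz1 : ℝ) ≤ (qz2 : ℝ) := by rw [← hq1, ← hq2]; exact hqkk1
    exact_mod_cast this
  have hdz0 : pz0 * qz1 - qz0 * pz1 = (-1) ^ (m + 1) := by
    have h : ((pz0 * qz1 - qz0 * pz1 : ℤ) : ℝ) = (((-1 : ℤ) ^ (m + 1) : ℤ) : ℝ) := by
      push_cast
      rw [← hp0, ← hq1, ← hq0, ← hp1]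
      exact myDet hξ m
    exact_mod_cast h
  have hdz1 : pz1 * qz2 - qz1 * pz2 = (-1) ^ (m + 2) := by
    have h : ((pz1 * qz2 - qz1 * pz2 : ℤ) : ℝ) = (((-1 : ℤ) ^ (m + 2) : ℤ) : ℝ) := by
      push_cast
      rw [← hp1, ← hq2, ← hq1, ← hp2]
      exact myDet hξ (m + 1)
    exact_mod_cast h
  have hpm1 : ∀ j : ℕ, ((-1 : ℤ) ^ j = 1 ∨ (-1 : ℤ) ^ j = -1) := by
    intro j
    rcases Nat.even_or_odd j with h | h
    · exact Or.inl h.neg_one_pow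
    · exact Or.inr h.neg_one_pow
  -- theta values
  set t0 := qden ξ m * ξ - pnum ξ m with ht0_def
  set t1 := qden ξ (m + 1) * ξ - pnum ξ (m + 1) with ht1_def
  set t2 := qden ξ (m + 2) * ξ - pnum ξ (m + 2) with ht2_def
  clear_value t0 t1 t2
  -- main case distinction
  rcases lt_or_ge |(P : ℝ)| (qden ξ (m + 1)) with hsmall | hbig
  · -- CASE |P| < q_k : best approximation contradiction at level (m, m+1)
    obtain ⟨u, v, huv1, huv2⟩ := myDecompZ pz0 qz0 pz1 qz1 P Q _ hdz0 (hpm1 (m + 1))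
    have c1 : (P : ℝ) = u * qden ξ m + v * qden ξ (m + 1) := by
      rw [hq0, hq1]; exact_mod_cast congrArg (Int.cast : ℤ → ℝ) huv1
    have c2 : (Q : ℝ) = -(u * pnum ξ m + v * pnum ξ (m + 1)) := by
      rw [hp0, hp1]; exact_mod_cast congrArg (Int.cast : ℤ → ℝ) huv2
    have hθeq : (P : ℝ) * ξ + Q = u * t0 + v * t1 := by
      rw [c1, c2, ht0_def, ht1_def]; ring
    have hu0 : u ≠ 0 := by
      intro h0
      subst h0
      have hPv : P = v * qz1 := by simpa using huv1
      rcases eq_or_ne v 0 with hv0 | hv0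
      · subst hv0
        have hP0 : P = 0 := by simpa using hPv
        have hQ0 : Q = 0 := by simpa using huv2
        rw [hP0, hQ0] at hcop
        exact not_isCoprime_zero_zero hcop
      · have h1 : (qz1 : ℝ) ≤ |(P : ℝ)| := by
          have : (P : ℝ) = (v : ℝ) * qz1 := by exact_mod_cast congrArg (Int.cast : ℤ → ℝ) hPv
          rw [this, abs_mul, abs_of_pos (by linarith : (0:ℝ) < (qz1:ℝ))]
          have h2 : (1 : ℝ) ≤ |(v : ℝ)| := by
            rw [← Int.cast_abs]
            exact_mod_cast Int.one_le_abs hv0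
          exact le_mul_of_one_le_left (by linarith) h2
        rw [hq1] at hsmall
        linarith
    have huv : (u : ℝ) * v ≤ 0 := by
      by_contra hpos
      push_neg at hpos
      have hpos' : 0 < u * v := by exact_mod_cast hpos
      have h1 : qz1 ≤ |P| := by
        rcases mul_pos_iff.1 hpos' with ⟨h1, h2⟩ | ⟨h1, h2⟩
        · have e1 : qz0 ≤ u * qz0 := le_mul_of_one_le_left (by omega) (by omega)
          have e2 : qz1 ≤ v * qz1 := le_mul_of_one_le_left (by omega) (by omega)
          have : qz0 + qz1 ≤ P := by omega
          have := le_abs_self P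
          omega
        · have e1 : qz0 ≤ (-u) * qz0 := le_mul_of_one_le_left (by omega) (by omega)
          have e2 : qz1 ≤ (-v) * qz1 := le_mul_of_one_le_left (by omega) (by omega)
          have : qz0 + qz1 ≤ -P := by
            have : -P = (-u) * qz0 + (-v) * qz1 := by rw [huv1]; ring
            omega
          have := neg_abs_le P
          omega
      have h2 : (qz1 : ℝ) ≤ |(P : ℝ)| := by
        rw [← Int.cast_abs]
        exact_mod_cast h1
      rw [hq1] at hsmall
      linarith
    have hsign : 0 ≤ ((u : ℝ) * t0) * ((v : ℝ) * t1) := by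
      have hts := myThetaSign hξ m
      rw [← ht0_def, ← ht1_def] at hts
      have e : ((u : ℝ) * t0) * ((v : ℝ) * t1) = ((u : ℝ) * v) * (t0 * t1) := by ring
      rw [e]
      exact mul_nonneg_iff.2 (Or.inr ⟨huv, hts.le⟩)
    have hu1 : (1 : ℝ) ≤ |(u : ℝ)| := by
      rw [← Int.cast_abs]; exact_mod_cast Int.one_le_abs hu0
    have hlow := myThetaLow hξ m
    rw [← ht0_def] at hlow
    have hchain : 1 / (2 * qden ξ (m + 1)) ≤ |(P : ℝ) * ξ + Q| := by
      calc 1 / (2 * qden ξ (m + 1)) ≤ 1 / (qden ξ m + qden ξ (m + 1)) := by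
            apply one_div_le_one_div_of_le (by linarith) (by linarith)
        _ ≤ |t0| := hlow
        _ ≤ |(u : ℝ)| * |t0| := le_mul_of_one_le_left (abs_nonneg _) hu1
        _ = |(u : ℝ) * t0| := (abs_mul _ _).symm
        _ ≤ |(u : ℝ) * t0 + (v : ℝ) * t1| := habs _ _ hsign
        _ = |(P : ℝ) * ξ + Q| := by rw [hθeq]
    linarith
  · -- CASE q_k ≤ |P|
    have h12b : 12 * (b : ℝ) ≤ |y 1| * qden ξ (m + 1) := by
      rw [div_le_iff₀ hy1] at hqk
      linarith
    have hyP : 12 * (b : ℝ) ≤ |y 1| * |(P : ℝ)| :=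
      le_trans h12b (mul_le_mul_of_nonneg_left hbig (abs_nonneg _))
    have hE2abs : |y 1| * |(P : ℝ)| ≤ b * (1 + 2 * T * δ) := by
      have h1 : |y 1 * (P : ℝ)| = |y 1| * |(P : ℝ)| := abs_mul _ _
      have h2 : |(b : ℝ) * (1 - ((A : ℝ) * e1 - (C : ℝ) * e0))| =
          b * |1 - ((A : ℝ) * e1 - (C : ℝ) * e0)| := by
        rw [abs_mul, abs_of_pos hbR]
      have h3 : |1 - ((A : ℝ) * e1 - (C : ℝ) * e0)| ≤ 1 + |(A : ℝ) * e1 - (C : ℝ) * e0| := by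
        calc |1 - ((A : ℝ) * e1 - (C : ℝ) * e0)| ≤ |(1 : ℝ)| + |(A : ℝ) * e1 - (C : ℝ) * e0| :=
              abs_sub _ _
          _ = 1 + |(A : ℝ) * e1 - (C : ℝ) * e0| := by rw [abs_one]
      calc |y 1| * |(P : ℝ)| = |y 1 * (P : ℝ)| := h1.symm
        _ = |(b : ℝ) * (1 - ((A : ℝ) * e1 - (C : ℝ) * e0))| := by rw [hE2]
        _ = b * |1 - ((A : ℝ) * e1 - (C : ℝ) * e0)| := h2
        _ ≤ b * (1 + 2 * T * δ) := by
            apply mul_le_mul_of_nonneg_left _ hbR.le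
            linarith [h3, hEbd]
    rcases le_or_gt ((3 : ℝ) / 22 * qden ξ (m + 2)) |(P : ℝ)| with hc4 | hc5
    · -- CASE |P| ≥ (3/22) q_{k+1}
      have h5 : 2 * (b : ℝ) * T * δ < 2 * b * T * (1 / (4 * b * qden ξ (m + 1))) :=
        mul_lt_mul_of_pos_left hcon (by positivity)
      have h6 : 2 * (b : ℝ) * T * (1 / (4 * b * qden ξ (m + 1))) = |y 1| * qden ξ (m + 2) / 8 := by
        rw [hT_def]
        field_simp
        ring
      have h7 : |y 1| * qden ξ (m + 2) / 8 ≤ |y 1| * |(P : ℝ)| - b := by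
        have hc4' : (3 : ℝ) / 22 * (|y 1| * qden ξ (m + 2)) ≤ |y 1| * |(P : ℝ)| := by
          have := mul_le_mul_of_nonneg_left hc4 (abs_nonneg (y 1))
          linarith [this]
        linarith
      have h8 : |y 1| * |(P : ℝ)| - b ≤ 2 * b * T * δ := by linarith [hE2abs]
      linarith
    · -- CASE q_k ≤ |P| < (3/22) q_{k+1}
      have hqq : qden ξ (m + 1) < 3 / 22 * qden ξ (m + 2) := lt_of_le_of_lt hbig hc5
      obtain ⟨u, v, huv1, huv2⟩ := myDecompZ pz1 qz1 pz2 qz2 P Q _ hdz1 (hpm1 (m + 2))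
      have c1 : (P : ℝ) = u * qden ξ (m + 1) + v * qden ξ (m + 2) := by
        rw [hq1, hq2]; exact_mod_cast congrArg (Int.cast : ℤ → ℝ) huv1
      have c2 : (Q : ℝ) = -(u * pnum ξ (m + 1) + v * pnum ξ (m + 2)) := by
        rw [hp1, hp2]; exact_mod_cast congrArg (Int.cast : ℤ → ℝ) huv2
      have hθeq : (P : ℝ) * ξ + Q = u * t1 + v * t2 := by
        rw [c1, c2, ht1_def, ht2_def]; ring
      by_cases hv0 : v = 0
      · -- v = 0 : (P, Q) = ±(q_k, -p_k), endgame via second row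
        subst hv0
        have hP' : P = u * qz1 := by simpa using huv1
        have hQ' : Q = -(u * pz1) := by simpa using huv2
        have hunit : IsUnit u :=
          hcop.isUnit_of_dvd' ⟨qz1, hP'⟩ ⟨-pz1, by rw [hQ']; ring⟩
        have hDP : D * P - C * Q = b := by
          rw [hP_def, hQ_def]; linear_combination b * hγZ
        have hCD : |(C : ℝ) * pnum ξ (m + 1) + (D : ℝ) * qden ξ (m + 1)| = b := by
          rw [hp1, hq1]
          rcases Int.isUnit_iff.1 hunit with h1 | h1 <;> subst h1
          · have : C * pz1 + D * qz1 = b := by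
              rw [hP', hQ'] at hDP; linarith [hDP]
            have hR : (C : ℝ) * pz1 + (D : ℝ) * qz1 = b := by exact_mod_cast this
            rw [hR, abs_of_pos hbR]
          · have : C * pz1 + D * qz1 = -b := by
              rw [hP', hQ'] at hDP; linarith [hDP]
            have hR : (C : ℝ) * pz1 + (D : ℝ) * qz1 = -b := by exact_mod_cast this
            rw [hR, abs_neg, abs_of_pos hbR]
        -- rewrite C p_k + D q_k = q_k (y1 + e1) - C t1
        have hWeq : (C : ℝ) * pnum ξ (m + 1) + (D : ℝ) * qden ξ (m + 1) =
            qden ξ (m + 1) * y 1 + qden ξ (m + 1) * e1 - (C : ℝ) * t1 := by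
          rw [he1_def, ht1_def]; ring
        have hXb : |y 1| * qden ξ (m + 1) ≤ b + qden ξ (m + 1) * δ + |(C : ℝ)| * |t1| := by
          obtain ⟨W, hW_def⟩ : ∃ W : ℝ,
              W = qden ξ (m + 1) * y 1 + qden ξ (m + 1) * e1 - (C : ℝ) * t1 := ⟨_, rfl⟩
          have h0 : |W| = b := by rw [hW_def, ← hWeq]; exact hCD
          have e : qden ξ (m + 1) * y 1 = W - qden ξ (m + 1) * e1 + (C : ℝ) * t1 := by
            rw [hW_def]; ring
          have h1 : |qden ξ (m + 1) * y 1| ≤ |W| + |qden ξ (m + 1) * e1| + |(C : ℝ) * t1| := by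
            rw [e]
            calc |W - qden ξ (m + 1) * e1 + (C : ℝ) * t1|
                ≤ |W - qden ξ (m + 1) * e1| + |(C : ℝ) * t1| := abs_add_le _ _
              _ ≤ |W| + |qden ξ (m + 1) * e1| + |(C : ℝ) * t1| := by
                  linarith [abs_sub W (qden ξ (m + 1) * e1)]
          have h2 : |qden ξ (m + 1) * y 1| = |y 1| * qden ξ (m + 1) := by
            rw [abs_mul, abs_of_pos hqkp]; ring
          have h3 : |qden ξ (m + 1) * e1| ≤ qden ξ (m + 1) * δ := by
            rw [abs_mul, abs_of_pos hqkp]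
            exact mul_le_mul_of_nonneg_left he1 hqkp.le
          have h4 : |(C : ℝ) * t1| = |(C : ℝ)| * |t1| := abs_mul _ _
          linarith [h0, h1, h2, h3, h4]
        have hCt1 : |(C : ℝ)| * |t1| ≤ |y 1| * qden ξ (m + 1) / 4 := by
          have h1 : |(C : ℝ)| * |t1| ≤ T * (1 / qden ξ (m + 2)) := by
            have := myThetaLe hξ (m + 1)
            rw [← ht1_def] at this
            exact mul_le_mul hCT this (abs_nonneg _) hTpos.le
          have h2 : T * (1 / qden ξ (m + 2)) = |y 1| * qden ξ (m + 1) / 4 := by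
            rw [hT_def]; field_simp
          linarith
        have hbsmall : (b : ℝ) ≤ |y 1| * qden ξ (m + 1) / 12 := by linarith
        have hδbig : (2 : ℝ) / 3 * |y 1| ≤ δ := by
          have h1 : qden ξ (m + 1) * (2 / 3 * |y 1|) ≤ qden ξ (m + 1) * δ := by
            linarith
          exact le_of_mul_le_mul_left h1 hqkp
        have hδsmall : δ < |y 1| / 48 := by
          have h1 : 1 / (4 * (b : ℝ) * qden ξ (m + 1)) ≤ |y 1| / 48 := by
            rw [div_le_div_iff₀ (by positivity) (by norm_num : (0:ℝ) < 48)]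
            have p1 : 4 * (b : ℝ) * (12 * b) ≤ 4 * b * (|y 1| * qden ξ (m + 1)) :=
              mul_le_mul_of_nonneg_left h12b (by positivity)
            have p3 : (1 : ℝ) * 1 ≤ (b : ℝ) * b := mul_le_mul hbR1 hbR1 zero_le_one hbR.le
            linarith [p1, p3]
          linarith
        linarith
      · -- v ≠ 0
        have hv1R : (1 : ℝ) ≤ |(v : ℝ)| := by
          rw [← Int.cast_abs]; exact_mod_cast Int.one_le_abs hv0
        have hu0 : u ≠ 0 := by
          intro h0
          subst h0
          have : (P : ℝ) = (v : ℝ) * qden ξ (m + 2) := by rw [c1]; ring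
          have h1 : qden ξ (m + 2) ≤ |(P : ℝ)| := by
            rw [this, abs_mul, abs_of_pos hqk1p]
            exact le_mul_of_one_le_left hqk1p.le hv1R
          linarith
        have hu1R : (1 : ℝ) ≤ |(u : ℝ)| := by
          rw [← Int.cast_abs]; exact_mod_cast Int.one_le_abs hu0
        have huv : (u : ℝ) * v ≤ 0 := by
          by_contra hpos
          push_neg at hpos
          have hpos' : 0 < u * v := by exact_mod_cast hpos
          have h1 : qz2 ≤ |P| := by
            rcases mul_pos_iff.1 hpos' with ⟨h1, h2⟩ | ⟨h1, h2⟩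
            · have e1 : qz1 ≤ u * qz1 := le_mul_of_one_le_left (by omega) (by omega)
              have e2 : qz2 ≤ v * qz2 := le_mul_of_one_le_left (by omega) (by omega)
              have : qz1 + qz2 ≤ P := by omega
              have := le_abs_self P
              omega
            · have e1 : qz1 ≤ (-u) * qz1 := le_mul_of_one_le_left (by omega) (by omega)
              have e2 : qz2 ≤ (-v) * qz2 := le_mul_of_one_le_left (by omega) (by omega)
              have : qz1 + qz2 ≤ -P := by
                have : -P = (-u) * qz1 + (-v) * qz2 := by rw [huv1]; ring
                omega
              have := neg_abs_le P
              omega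
          have h2 : (qz2 : ℝ) ≤ |(P : ℝ)| := by
            rw [← Int.cast_abs]; exact_mod_cast h1
          rw [← hq2] at h2
          linarith
        have hsign : 0 ≤ ((u : ℝ) * t1) * ((v : ℝ) * t2) := by
          have hts := myThetaSign hξ (m + 1)
          rw [← ht1_def, ← ht2_def] at hts
          have e : ((u : ℝ) * t1) * ((v : ℝ) * t2) = ((u : ℝ) * v) * (t1 * t2) := by ring
          rw [e]
          exact mul_nonneg_iff.2 (Or.inr ⟨huv, hts.le⟩)
        -- lower bound |u| q_k ≥ (19/22) q_{k+1}
        have hulow : (19 : ℝ) / 22 * qden ξ (m + 2) ≤ |(u : ℝ)| * qden ξ (m + 1) := by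
          have c1' : (v : ℝ) * qden ξ (m + 2) - (P : ℝ) = -((u : ℝ) * qden ξ (m + 1)) := by
            rw [c1]; ring
          have h1 : |(v : ℝ) * qden ξ (m + 2)| - |(P : ℝ)| ≤ |(u : ℝ)| * qden ξ (m + 1) := by
            calc |(v : ℝ) * qden ξ (m + 2)| - |(P : ℝ)|
                ≤ |(v : ℝ) * qden ξ (m + 2) - (P : ℝ)| := abs_sub_abs_le_abs_sub _ _
              _ = |(u : ℝ) * qden ξ (m + 1)| := by rw [c1', abs_neg]
              _ = |(u : ℝ)| * qden ξ (m + 1) := by rw [abs_mul, abs_of_pos hqkp]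
          have h2 : qden ξ (m + 2) ≤ |(v : ℝ) * qden ξ (m + 2)| := by
            rw [abs_mul, abs_of_pos hqk1p]
            exact le_mul_of_one_le_left hqk1p.le hv1R
          linarith
        -- conclude
        have hθ1low := myThetaLow hξ (m + 1)
        rw [← ht1_def] at hθ1low
        have hθ1low' : (22 : ℝ) / 25 * (1 / qden ξ (m + 2)) ≤ |t1| := by
          have h1 : qden ξ (m + 1) + qden ξ (m + 2) ≤ 25 / 22 * qden ξ (m + 2) := by
            linarith
          have h2 : 1 / (25 / 22 * qden ξ (m + 2)) ≤ 1 / (qden ξ (m + 1) + qden ξ (m + 2)) :=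
            one_div_le_one_div_of_le (by linarith) h1
          have h3 : 1 / (25 / 22 * qden ξ (m + 2)) = 22 / 25 * (1 / qden ξ (m + 2)) := by
            field_simp
          linarith
        have hfinal : (19 : ℝ) / 25 * (1 / qden ξ (m + 1)) ≤ |(u : ℝ)| * |t1| := by
          have h1 : ((19 : ℝ) / 22 * qden ξ (m + 2)) * ((22 : ℝ) / 25 * (1 / qden ξ (m + 2)))
              ≤ (|(u : ℝ)| * qden ξ (m + 1)) * |t1| := by
            apply mul_le_mul hulow hθ1low' (by positivity) (by positivity)
          have h2 : ((19 : ℝ) / 22 * qden ξ (m + 2)) * ((22 : ℝ) / 25 * (1 / qden ξ (m + 2)))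
              = 19 / 25 := by field_simp <;> ring
          have h3 : (|(u : ℝ)| * qden ξ (m + 1)) * |t1| = (|(u : ℝ)| * |t1|) * qden ξ (m + 1) := by
            ring
          rw [h2, h3] at h1
          rw [mul_one_div, div_le_iff₀ hqkp]
          exact h1
        have hchain : (19 : ℝ) / 25 * (1 / qden ξ (m + 1)) ≤ 2 * b * δ := by
          calc (19 : ℝ) / 25 * (1 / qden ξ (m + 1)) ≤ |(u : ℝ)| * |t1| := hfinal
            _ = |(u : ℝ) * t1| := (abs_mul _ _).symm
            _ ≤ |(u : ℝ) * t1 + (v : ℝ) * t2| := habs _ _ hsign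
            _ = |(P : ℝ) * ξ + Q| := by rw [hθeq]
            _ ≤ 2 * b * δ := hPQsmall
        have : 1 / (2 * qden ξ (m + 1)) < 19 / 25 * (1 / qden ξ (m + 1)) := by
          rw [mul_one_div, div_lt_div_iff₀ (by positivity) hqkp]
          linarith
        linarith
end

section
/- Let ξ < 0 be irrational. Then the set {γ·(ξ,1)ᵀ : γ ∈ Γ₊} ∩ ℝ₊², where Γ₊ is the set of matrices in SL(2,ℤ) with all entries nonnegative, is dense in the closed positive quadrant ℝ₊². -/
set_option maxHeartbeats 1000000


open Matrix MeasureTheory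

section DaniNogueiraAux

/-- Dirichlet with either sign: a multiple of α within η of an integer, positive multiplier. -/
lemma approx_any (α : ℝ) {η : ℝ} (hη : 0 < η) :
    ∃ q p : ℤ, 1 ≤ q ∧ |(q : ℝ) * α - p| < η := by
  obtain ⟨n, hn⟩ := exists_nat_gt (1 / η)
  have hn0 : 0 < n + 1 := Nat.succ_pos n
  obtain ⟨j, k, hk0, hkn, h⟩ := Real.exists_int_int_abs_mul_sub_le α hn0
  refine ⟨k, j, hk0, lt_of_le_of_lt h ?_⟩
  rw [div_lt_iff₀ (by positivity)]
  have h2 : 1 / η < (n : ℝ) + 1 := by linarith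
  rw [div_lt_iff₀ hη] at h2
  push_cast
  linarith

/-- One-sided approximation: for irrational α > 0, p - qα ∈ (0, η) with q ≥ 1, p ≥ 0. -/
lemma approx_above (α : ℝ) (hα : Irrational α) (hpos : 0 < α) {η : ℝ} (hη : 0 < η)
    (hη1 : η ≤ 1) :
    ∃ q p : ℤ, 1 ≤ q ∧ 0 ≤ p ∧ 0 < (p : ℝ) - q * α ∧ (p : ℝ) - q * α < η := by
  obtain ⟨q, p, hq, habs⟩ := approx_any α (lt_min hη one_pos)
  have habs1 : |(q : ℝ) * α - p| < η := lt_of_lt_of_le habs (min_le_left _ _)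
  have habs2 : |(q : ℝ) * α - p| < 1 := lt_of_lt_of_le habs (min_le_right _ _)
  have hqR : (1 : ℝ) ≤ (q : ℝ) := by exact_mod_cast hq
  have hqa : 0 < (q : ℝ) * α := by nlinarith
  have hirr : Irrational ((q : ℝ) * α - p) := ((hα.intCast_mul (m := q) (by omega)).sub_intCast p)
  have hne : (q : ℝ) * α - p ≠ 0 := fun h => (hirr.ne_int 0) (by rw [h]; norm_num)
  have hb := abs_lt.mp habs1
  have hb2 := abs_lt.mp habs2
  rcases lt_or_gt_of_ne hne with hlt | hgt
  · have hp0 : 0 ≤ p := by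
      have h4 : (-1 : ℝ) < (p : ℝ) := by linarith
      have h5 : (-1 : ℤ) < p := by exact_mod_cast h4
      omega
    exact ⟨q, p, hq, hp0, by linarith, by linarith⟩
  · set θ : ℝ := (q : ℝ) * α - p with hθdef
    have hθ0 : 0 < θ := hgt
    have hθη : θ < η := by linarith
    have hθ1 : θ < 1 := by linarith
    have hθirr : Irrational θ := hirr
    set j : ℤ := ⌊1 / θ⌋ with hjdef
    have hj1 : 1 ≤ j := by
      have h6 : (1 : ℝ) ≤ 1 / θ := by
        rw [le_div_iff₀ hθ0]; linarith
      exact_mod_cast Int.le_floor.mpr (by exact_mod_cast h6)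
    have hjθle : (j : ℝ) * θ ≤ 1 := by
      have := Int.floor_le (1 / θ)
      calc (j : ℝ) * θ ≤ (1 / θ) * θ := by nlinarith
        _ = 1 := by field_simp
    have hjθne : (j : ℝ) * θ ≠ 1 := by
      intro h
      have : θ = 1 / (j : ℝ) := by
        field_simp
        nlinarith
      have : ¬ Irrational θ := by
        rw [this]
        rw [show (1 : ℝ) / (j : ℝ) = ((1 / (j:ℚ) : ℚ) : ℝ) by push_cast; ring]
        exact Rat.not_irrational _
      exact this hθirr
    have hjθlt : (j : ℝ) * θ < 1 := lt_of_le_of_ne hjθle hjθne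
    have hjθgt : 1 - θ < (j : ℝ) * θ := by
      have := Int.lt_floor_add_one (1 / θ)
      have h3 : 1 / θ < (j : ℝ) + 1 := this
      have h7 : 1 < ((j : ℝ) + 1) * θ := by
        rw [div_lt_iff₀ hθ0] at h3; linarith
      nlinarith
    have hp0 : 0 ≤ p := by
      have h4 : (-1 : ℝ) < (p : ℝ) := by linarith
      have h5 : (-1 : ℤ) < p := by exact_mod_cast h4
      omega
    refine ⟨j * q, j * p + 1, ?_, by positivity, ?_, ?_⟩
    · exact one_le_mul_of_one_le_of_one_le hj1 hq
    · push_cast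
      nlinarith
    · push_cast
      nlinarith

/-- Coprime one-sided approximation with large denominator. -/
lemma approx_coprime (α : ℝ) (hα : Irrational α) (hpos : 0 < α) {ε : ℝ} (hε : 0 < ε)
    (hε1 : ε ≤ 1) :
    ∃ q p : ℤ, 1 ≤ q ∧ 1 ≤ p ∧ IsCoprime q p ∧ 0 < (p : ℝ) - q * α ∧
      (p : ℝ) - q * α < ε ∧ 1 / (q : ℝ) < ε := by
  set K : ℤ := ⌈1 / ε⌉ with hK
  have hKR : 1 / ε ≤ (K : ℝ) := Int.le_ceil _
  have hK1 : 1 ≤ K := by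
    have h1 : (1 : ℝ) ≤ 1 / ε := by rw [le_div_iff₀ hε]; linarith
    have : (1 : ℝ) ≤ (K : ℝ) := le_trans h1 hKR
    exact_mod_cast this
  -- minimum gap over denominators 1..K
  have hne : (Finset.Icc 1 K).Nonempty := ⟨1, Finset.mem_Icc.mpr ⟨le_refl _, hK1⟩⟩
  set c : ℝ := (Finset.Icc 1 K).inf' hne (fun m => (⌈(m : ℝ) * α⌉ : ℝ) - m * α) with hc
  have hcpos : 0 < c := by
    rw [hc, Finset.lt_inf'_iff]
    intro m hm
    rw [Finset.mem_Icc] at hm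
    have hirr : Irrational ((m : ℝ) * α) := hα.intCast_mul (by omega)
    have hle : (m : ℝ) * α ≤ (⌈(m : ℝ) * α⌉ : ℝ) := Int.le_ceil _
    rcases lt_or_eq_of_le hle with h | h
    · linarith
    · exact absurd h (hirr.ne_int _)
  set η : ℝ := min ε c with hη
  have hηpos : 0 < η := lt_min hε hcpos
  have hη1 : η ≤ 1 := le_trans (min_le_left _ _) hε1
  obtain ⟨q, p, hq1, hp0, he0, heη⟩ := approx_above α hα hpos hηpos hη1
  set g : ℕ := Int.gcd q p with hg
  have hg0 : 0 < g := Int.gcd_pos_of_ne_zero_left p (by omega)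
  have hgq : (g : ℤ) ∣ q := Int.gcd_dvd_left q p
  have hgp : (g : ℤ) ∣ p := Int.gcd_dvd_right q p
  obtain ⟨q₁, hq₁⟩ := hgq
  obtain ⟨p₁, hp₁⟩ := hgp
  have hgR : (0 : ℝ) < (g : ℝ) := by exact_mod_cast hg0
  have hq₁1 : 1 ≤ q₁ := by
    rcases le_or_gt 1 q₁ with h | h
    · exact h
    · exfalso; nlinarith [hq₁ ▸ hq1, (by exact_mod_cast hg0 : (0:ℤ) < (g:ℤ))]
  -- e₁ = p₁ - q₁ α = e / g > 0
  have key : (g : ℝ) * ((p₁ : ℝ) - q₁ * α) = (p : ℝ) - q * α := by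
    have h1 : (p : ℝ) = (g : ℝ) * p₁ := by exact_mod_cast congrArg (Int.cast : ℤ → ℝ) hp₁
    have h2 : (q : ℝ) = (g : ℝ) * q₁ := by exact_mod_cast congrArg (Int.cast : ℤ → ℝ) hq₁
    rw [h1, h2]; ring
  have he₁0 : 0 < (p₁ : ℝ) - q₁ * α := by nlinarith
  have he₁η : (p₁ : ℝ) - q₁ * α < η := by
    have hg1 : (1 : ℝ) ≤ (g : ℝ) := by exact_mod_cast hg0
    nlinarith
  have hp₁1 : 1 ≤ p₁ := by
    have hq₁R : (1 : ℝ) ≤ (q₁ : ℝ) := by exact_mod_cast hq₁1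
    have h8 : (0 : ℝ) < (p₁ : ℝ) := by nlinarith
    have h9 : (0 : ℤ) < p₁ := by exact_mod_cast h8
    omega
  have hcop : IsCoprime q₁ p₁ := by
    rw [Int.isCoprime_iff_gcd_eq_one]
    have := Int.gcd_div_gcd_div_gcd (i := q) (j := p) hg0
    have hq₁' : q₁ = q / (g : ℤ) := by
      rw [hq₁]; rw [Int.mul_ediv_cancel_left _ (by exact_mod_cast hg0.ne')]
    have hp₁' : p₁ = p / (g : ℤ) := by
      rw [hp₁]; rw [Int.mul_ediv_cancel_left _ (by exact_mod_cast hg0.ne')]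
    rw [hq₁', hp₁']; exact this
  -- q₁ > K, hence 1/q₁ < ε
  have hq₁K : K < q₁ := by
    by_contra hle
    push_neg at hle
    have hmem : q₁ ∈ Finset.Icc 1 K := Finset.mem_Icc.mpr ⟨hq₁1, hle⟩
    have hceil : ((⌈(q₁ : ℝ) * α⌉ : ℝ) - q₁ * α) ≥ c := by
      rw [hc]
      exact (Finset.inf'_le _ hmem).trans (le_refl _)
    have hple : (⌈(q₁ : ℝ) * α⌉ : ℤ) ≤ p₁ := by
      apply Int.ceil_le.mpr
      have : (q₁ : ℝ) * α < p₁ := by linarith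
      exact this.le
    have hpleR : ((⌈(q₁ : ℝ) * α⌉ : ℤ) : ℝ) ≤ (p₁ : ℝ) := by exact_mod_cast hple
    have : c ≤ (p₁ : ℝ) - q₁ * α := by linarith
    have : η ≤ (p₁ : ℝ) - q₁ * α := le_trans (min_le_right _ _) this
    linarith
  have hfin : 1 / (q₁ : ℝ) < ε := by
    have hKq : (K : ℝ) < q₁ := by exact_mod_cast hq₁K
    have hq₁R : (0 : ℝ) < (q₁ : ℝ) := by exact_mod_cast hq₁1
    rw [div_lt_iff₀ hq₁R]
    have h2 : 1 / ε < (q₁ : ℝ) := lt_of_le_of_lt hKR hKq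
    rw [div_lt_iff₀ hε] at h2
    linarith
  exact ⟨q₁, p₁, hq₁1, hp₁1, hcop, he₁0, lt_of_lt_of_le he₁η (min_le_left _ _), hfin⟩

/-- Bounded Bézout: for coprime positive `m n` there are `x ∈ [1,n]`, `y ≥ 0`
with `x * m - n * y = 1`. -/
lemma bezout_bounded {m n : ℤ} (hm : 1 ≤ m) (hn : 1 ≤ n) (h : IsCoprime m n) :
    ∃ x y : ℤ, 1 ≤ x ∧ x ≤ n ∧ 0 ≤ y ∧ x * m - n * y = 1 := by
  rcases eq_or_lt_of_le hn with hn1 | hn2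
  · refine ⟨1, m - 1, le_refl _, by omega, by omega, ?_⟩
    rw [← hn1]; ring
  · obtain ⟨u, v, huv⟩ := h
    -- u * m + v * n = 1
    have hn0 : n ≠ 0 := by omega
    set x : ℤ := u % n with hx
    have hx0 : 0 ≤ x := Int.emod_nonneg u hn0
    have hxn : x < n := Int.emod_lt_of_pos u (by omega)
    set w : ℤ := -v - (u / n) * m with hw
    have hid : x * m - n * w = 1 := by
      have hu : u = n * (u / n) + u % n := (Int.mul_ediv_add_emod u n).symm
      have hx' : x = u - n * (u / n) := by rw [hx, Int.emod_def]
      calc x * m - n * w = u * m + v * n := by rw [hx', hw]; ring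
        _ = 1 := by linarith [huv]
    have hx1 : 1 ≤ x := by
      rcases eq_or_lt_of_le hx0 with h0 | h0
      · exfalso
        have : n * w = -1 := by rw [← h0] at hid; linarith
        have h2 : n ∣ (-1 : ℤ) := ⟨w, this.symm⟩
        have h3 : n ∣ (1 : ℤ) := (dvd_neg (α := ℤ)).mp h2
        have h4 := Int.le_of_dvd one_pos h3
        omega
      · omega
    have hw0 : 0 ≤ w := by
      by_contra hneg
      push_neg at hneg
      have : n * w ≤ -n := by nlinarith
      nlinarith
    exact ⟨x, w, hx1, by omega, hw0, hid⟩

/-- Lemma A: an SL₂-type quadruple with nonnegative entries, first-row value near `s`,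
second-row value tiny positive. -/
lemma lemA (α : ℝ) (hα : Irrational α) (hpos : 0 < α) {ε : ℝ} (hε : 0 < ε) (hε1 : ε ≤ 1)
    {s : ℝ} (hs : 0 ≤ s) :
    ∃ A B C D : ℤ, 0 ≤ A ∧ 0 ≤ B ∧ 0 ≤ C ∧ 0 ≤ D ∧ A * D - B * C = 1 ∧
      0 ≤ (B : ℝ) - A * α ∧ |((B : ℝ) - A * α) - s| ≤ 2 * ε ∧
      0 < (D : ℝ) - C * α ∧ (D : ℝ) - C * α < ε := by
  obtain ⟨q, p, hq1, hp1, hcop, he0, heε, hinv⟩ := approx_coprime α hα hpos hε hε1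
  obtain ⟨x, y, hx1, hxq, hy0, hxy⟩ := bezout_bounded hp1 hq1 hcop.symm
  -- x * p - q * y = 1
  set e : ℝ := (p : ℝ) - q * α with he
  set e' : ℝ := (y : ℝ) - x * α with he'
  have hqR : (1 : ℝ) ≤ (q : ℝ) := by exact_mod_cast hq1
  have hxR : (1 : ℝ) ≤ (x : ℝ) := by exact_mod_cast hx1
  have hxqR : (x : ℝ) ≤ (q : ℝ) := by exact_mod_cast hxq
  have hyR : (0 : ℝ) ≤ (y : ℝ) := by exact_mod_cast hy0
  have hq0 : (0 : ℝ) < (q : ℝ) := by linarith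
  have hkey : (q : ℝ) * e' = (x : ℝ) * e - 1 := by
    have hxyR : (x : ℝ) * p - q * y = 1 := by exact_mod_cast hxy
    rw [he', he]; nlinarith
  have hεq : 1 < ε * q := by
    rw [div_lt_iff₀ hq0] at hinv; linarith
  have he'lb : -(2 * ε) < e' := by
    have h1 : -1 ≤ (q : ℝ) * e' := by nlinarith
    nlinarith
  have he'ub : e' < 2 * ε := by
    have h1 : (q : ℝ) * e' ≤ (q : ℝ) * e := by nlinarith
    have h2 : e' ≤ e := by nlinarith
    linarith
  -- choose the shift t
  rcases le_or_gt s e' with hcase | hcase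
  · -- t = 0 : rows (x,y) and (q,p)
    refine ⟨x, y, q, p, by omega, hy0, by omega, by omega, by linarith [hxy], ?_, ?_, he0, heε⟩
    · linarith
    · rw [abs_le]; constructor <;> nlinarith
  · obtain ⟨t, ht⟩ : ∃ t : ℤ, t = ⌈(s - e') / e⌉ := ⟨_, rfl⟩
    have htR : ((s - e') / e) ≤ (t : ℝ) := by rw [ht]; exact Int.le_ceil _
    have htR2 : (t : ℝ) < (s - e') / e + 1 := by rw [ht]; exact Int.ceil_lt_add_one _
    have ht1 : 1 ≤ t := by
      have hdp : 0 < (s - e') / e := div_pos (by linarith) he0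
      rw [ht]; exact_mod_cast Int.ceil_pos.mpr hdp
    have htRR : (1 : ℝ) ≤ (t : ℝ) := by exact_mod_cast ht1
    have hte_ge : s - e' ≤ (t : ℝ) * e := by
      rw [div_le_iff₀ he0] at htR; linarith
    have hte_lt : (t : ℝ) * e < s - e' + e := by
      rw [← lt_div_iff₀ he0]
      calc (t : ℝ) < (s - e') / e + 1 := htR2
        _ = (s - e' + e) / e := by field_simp
    have hA0 : 0 ≤ x + t * q := by nlinarith
    have hB0 : 0 ≤ y + t * p := by nlinarith
    have hdet : (x + t * q) * p - (y + t * p) * q = 1 := by linear_combination hxy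
    have hval : ((y + t * p : ℤ) : ℝ) - ((x + t * q : ℤ) : ℝ) * α = e' + t * e := by
      push_cast; rw [he', he]; ring
    refine ⟨x + t * q, y + t * p, q, p, hA0, hB0, by omega, by omega, hdet, ?_, ?_, he0, heε⟩
    · rw [hval]; nlinarith
    · rw [hval, abs_le]
      constructor <;> nlinarith

/-- Rational directions: a nonnegative SL₂ quadruple `(a,b,c,d)` and scale `s`
with `a*s ≈ z0`, `c*s ≈ z1`. -/
lemma lemDir {z0 z1 : ℝ} (hz0 : 0 ≤ z0) (hz1 : 0 ≤ z1) {δ : ℝ} (hδ : 0 < δ) :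
    ∃ a b c d : ℤ, ∃ s : ℝ, 0 ≤ a ∧ 0 ≤ b ∧ 0 ≤ c ∧ 0 ≤ d ∧ a * d - b * c = 1 ∧
      0 ≤ s ∧ |(a : ℝ) * s - z0| ≤ δ ∧ |(c : ℝ) * s - z1| ≤ δ := by
  rcases eq_or_lt_of_le hz0 with hz0e | hz0p
  · -- z0 = 0 : direction (1, N)
    obtain ⟨N, hN⟩ : ∃ N : ℤ, 1 ≤ N ∧ z1 / δ ≤ (N : ℝ) := by
      refine ⟨max 1 ⌈z1 / δ⌉, le_max_left _ _, ?_⟩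
      calc z1 / δ ≤ (⌈z1 / δ⌉ : ℝ) := Int.le_ceil _
        _ ≤ ((max 1 ⌈z1 / δ⌉ : ℤ) : ℝ) := by exact_mod_cast le_max_right _ _
    obtain ⟨hN1, hN2⟩ := hN
    have hNR : (1 : ℝ) ≤ (N : ℝ) := by exact_mod_cast hN1
    refine ⟨1, 0, N, 1, z1 / N, by norm_num, by norm_num, by omega, by norm_num, by ring, by positivity, ?_, ?_⟩
    · rw [← hz0e]
      have h1 : z1 / (N : ℝ) ≤ δ := by
        rw [div_le_iff₀ (by linarith)]
        rw [div_le_iff₀ hδ] at hN2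
        linarith
      push_cast
      rw [one_mul, sub_zero, abs_of_nonneg (by positivity)]
      exact h1
    · have : (N : ℝ) * (z1 / N) = z1 := by field_simp
      rw [this, sub_self, abs_zero]; linarith
  · rcases eq_or_lt_of_le hz1 with hz1e | hz1p
    · -- z1 = 0 : identity
      refine ⟨1, 0, 0, 1, z0, by norm_num, by norm_num, by norm_num, by norm_num, by norm_num,
        hz0, by push_cast; rw [one_mul, sub_self, abs_zero]; linarith, ?_⟩
      rw [← hz1e]
      norm_num
      linarith
    · -- z0, z1 > 0 : prime direction
      obtain ⟨P, hPbound, hPprime⟩ := Nat.exists_infinite_primes (max 2 (⌈2 * z0 / δ⌉.toNat + 1))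
      have hP2 : 2 ≤ P := le_trans (le_max_left _ _) hPbound
      have hPR : (2 * z0 / δ) ≤ (P : ℝ) := by
        have h1 : ⌈2 * z0 / δ⌉.toNat + 1 ≤ P := le_trans (le_max_right _ _) hPbound
        have h2 : (2 * z0 / δ) ≤ (⌈2 * z0 / δ⌉ : ℝ) := Int.le_ceil _
        have h3 : (⌈2 * z0 / δ⌉ : ℝ) ≤ ((⌈2 * z0 / δ⌉.toNat : ℤ) : ℝ) := by
          exact_mod_cast Int.self_le_toNat _
        have h4 : ((⌈2 * z0 / δ⌉.toNat : ℕ) : ℝ) ≤ (P : ℝ) := by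
          exact_mod_cast Nat.le_of_succ_le h1
        push_cast at h3 ⊢
        linarith
      have hPR1 : (1 : ℝ) ≤ (P : ℝ) := by exact_mod_cast (by omega : 1 ≤ P)
      have hPRpos : (0 : ℝ) < (P : ℝ) := by linarith
      set r : ℝ := (P : ℝ) * z1 / z0 with hr
      have hrpos : 0 < r := by positivity
      set c₀ : ℤ := ⌈r⌉ with hc₀
      have hc₀1 : 1 ≤ c₀ := Int.ceil_pos.mpr hrpos
      have hc₀r : r ≤ (c₀ : ℝ) := Int.le_ceil _
      have hc₀r2 : (c₀ : ℝ) < r + 1 := Int.ceil_lt_add_one _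
      set c : ℤ := if ((P : ℤ) ∣ c₀) then c₀ + 1 else c₀ with hcdef
      have hc1 : 1 ≤ c := by
        rw [hcdef]; split <;> omega
      have hcnd : ¬ ((P : ℤ) ∣ c) := by
        rw [hcdef]
        split
        · rename_i hdvd
          intro hdvd2
          have hP1 : (P : ℤ) ∣ 1 := by simpa using dvd_sub hdvd2 hdvd
          have := Int.le_of_dvd one_pos hP1
          omega
        · rename_i hdvd; exact hdvd
      have hcr : |(c : ℝ) - r| ≤ 2 := by
        have h5 : ((c₀ : ℤ) : ℝ) ≤ (c : ℝ) := by
          rw [hcdef]; split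
          · push_cast; linarith
          · linarith
        have h6 : (c : ℝ) ≤ (c₀ : ℝ) + 1 := by
          rw [hcdef]; split
          · push_cast; linarith
          · push_cast; linarith
        rw [abs_le]; constructor <;> linarith
      have hcop : IsCoprime ((P : ℕ) : ℤ) c :=
        (Nat.prime_iff_prime_int.mp hPprime).coprime_iff_not_dvd.mpr hcnd
      obtain ⟨d, b, hd1, hdc, hb0, hdb⟩ := bezout_bounded
        (by exact_mod_cast (by omega : 1 ≤ P) : 1 ≤ ((P : ℕ) : ℤ)) hc1 hcop
      -- d * P - c * b = 1
      refine ⟨(P : ℤ), b, c, d, z0 / (P : ℝ), by positivity, hb0, by omega, by omega,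
        by linear_combination hdb, by positivity, ?_, ?_⟩
      · rw [show ((P : ℤ) : ℝ) * (z0 / (P : ℝ)) - z0 = 0 by push_cast; field_simp; ring]
        simpa using hδ.le
      · have hval : (c : ℝ) * (z0 / (P : ℝ)) - z1 = ((c : ℝ) - r) * (z0 / (P : ℝ)) := by
          rw [hr]; field_simp
        rw [hval, abs_mul]
        have h7 : |z0 / (P : ℝ)| = z0 / (P : ℝ) := abs_of_nonneg (by positivity)
        rw [h7]
        have h8 : z0 / (P : ℝ) ≤ δ / 2 := by
          rw [div_le_iff₀ hPRpos]
          rw [div_le_iff₀ hδ] at hPR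
          nlinarith
        nlinarith [abs_nonneg ((c : ℝ) - r), div_nonneg hz0 hPRpos.le]

lemma act_mk (a b c d : ℤ) (x : Fin 2 → ℝ) :
    act !![a, b; c, d] x = ![(a : ℝ) * x 0 + (b : ℝ) * x 1, (c : ℝ) * x 0 + (d : ℝ) * x 1] := by
  funext i
  fin_cases i <;>
    simp [act, Matrix.mulVec, dotProduct, Fin.sum_univ_two, Matrix.map_apply]


end DaniNogueiraAux

/-- Dani–Nogueira: for `ξ < 0` irrational, the intersection of the
semi-orbit `Γ₊ (ξ, 1)ᵀ` with the closed positive quadrant is dense in the quadrant. -/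
theorem stmt18 (ξ : ℝ) (hξ : Irrational ξ) (hneg : ξ < 0) :
    ∀ z : Fin 2 → ℝ, 0 ≤ z 0 → 0 ≤ z 1 →
      z ∈ closure {w : Fin 2 → ℝ | (∃ γ : Matrix (Fin 2) (Fin 2) ℤ,
        γ.det = 1 ∧ (∀ i j : Fin 2, 0 ≤ γ i j) ∧ w = act γ ![ξ, 1]) ∧
        0 ≤ w 0 ∧ 0 ≤ w 1} := by
  intro z hz0 hz1
  set α : ℝ := -ξ with hαdef
  have hα : Irrational α := hξ.neg
  have hαpos : 0 < α := by rw [hαdef]; linarith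
  rw [Metric.mem_closure_iff]
  intro ε hε
  obtain ⟨a, b, c, d, s, ha, hb, hc, hd, hdet1, hs, hzd0, hzd1⟩ :=
    lemDir hz0 hz1 (show (0:ℝ) < ε / 4 by linarith)
  have haR : (0 : ℝ) ≤ (a : ℝ) := by exact_mod_cast ha
  have hbR : (0 : ℝ) ≤ (b : ℝ) := by exact_mod_cast hb
  have hcR : (0 : ℝ) ≤ (c : ℝ) := by exact_mod_cast hc
  have hdR : (0 : ℝ) ≤ (d : ℝ) := by exact_mod_cast hd
  set M : ℝ := (a : ℝ) + (b : ℝ) + (c : ℝ) + (d : ℝ) + 1 with hM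
  have hM1 : 1 ≤ M := by rw [hM]; linarith
  set ε₁ : ℝ := min 1 (ε / (8 * M)) with hε₁
  have hε₁pos : 0 < ε₁ := lt_min one_pos (by positivity)
  have hε₁le1 : ε₁ ≤ 1 := min_le_left _ _
  have hε₁leM : ε₁ ≤ ε / (8 * M) := min_le_right _ _
  obtain ⟨A, B, C, D, hA, hB, hC, hD, hdet2, hw0n, hw0c, hw1p, hw1l⟩ :=
    lemA α hα hαpos hε₁pos hε₁le1 hs
  set w0 : ℝ := (B : ℝ) - A * α with hw0
  set w1 : ℝ := (D : ℝ) - C * α with hw1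
  set γ : Matrix (Fin 2) (Fin 2) ℤ := !![a, b; c, d] * !![A, B; C, D] with hγ
  have hγeq : γ = !![a * A + b * C, a * B + b * D; c * A + d * C, c * B + d * D] := by
    rw [hγ, Matrix.mul_fin_two]
  have hdetγ : γ.det = 1 := by
    rw [hγ, Matrix.det_mul, Matrix.det_fin_two_of, Matrix.det_fin_two_of, hdet1, hdet2]
    norm_num
  have hnn : ∀ i j : Fin 2, 0 ≤ γ i j := by
    intro i j
    rw [hγeq]
    fin_cases i <;> fin_cases j <;> simp <;>
      [ exact add_nonneg (mul_nonneg ha hA) (mul_nonneg hb hC);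
        exact add_nonneg (mul_nonneg ha hB) (mul_nonneg hb hD);
        exact add_nonneg (mul_nonneg hc hA) (mul_nonneg hd hC);
        exact add_nonneg (mul_nonneg hc hB) (mul_nonneg hd hD) ]
  -- the image vector
  have hact : act γ ![ξ, 1] =
      ![(a : ℝ) * w0 + (b : ℝ) * w1, (c : ℝ) * w0 + (d : ℝ) * w1] := by
    rw [hγeq, act_mk]
    funext i
    fin_cases i <;> simp [hw0, hw1, hαdef] <;> push_cast <;> ring
  set w : Fin 2 → ℝ := ![(a : ℝ) * w0 + (b : ℝ) * w1, (c : ℝ) * w0 + (d : ℝ) * w1] with hwdef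
  have hwmem0 : 0 ≤ w 0 := by
    rw [hwdef]
    simp only [Matrix.cons_val_zero]
    have := mul_nonneg haR hw0n
    have := mul_nonneg hbR hw1p.le
    linarith
  have hwmem1 : 0 ≤ w 1 := by
    rw [hwdef]
    simp only [Matrix.cons_val_one, Matrix.head_cons, Matrix.cons_val_zero]
    have := mul_nonneg hcR hw0n
    have := mul_nonneg hdR hw1p.le
    linarith
  refine ⟨w, ⟨⟨γ, hdetγ, hnn, hact.symm ▸ rfl⟩, hwmem0, hwmem1⟩, ?_⟩
  · -- distance estimate
    rw [dist_pi_lt_iff hε]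
    have habs0 : |(a : ℝ) * w0 + (b : ℝ) * w1 - z 0| < ε := by
      have e1 : |(a : ℝ) * (w0 - s)| ≤ (a : ℝ) * (2 * ε₁) := by
        rw [abs_mul, abs_of_nonneg haR]
        exact mul_le_mul_of_nonneg_left hw0c haR
      have e2 : (b : ℝ) * w1 ≤ (b : ℝ) * ε₁ := mul_le_mul_of_nonneg_left hw1l.le hbR
      have e3 : ((a : ℝ) * 2 + (b : ℝ)) * ε₁ ≤ ε / 4 := by
        have h4 : ((a : ℝ) * 2 + (b : ℝ)) ≤ 2 * M := by rw [hM]; linarith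
        calc ((a : ℝ) * 2 + (b : ℝ)) * ε₁ ≤ (2 * M) * ε₁ := by nlinarith
          _ ≤ (2 * M) * (ε / (8 * M)) := by nlinarith
          _ = ε / 4 := by field_simp; ring
      have expand : (a : ℝ) * w0 + (b : ℝ) * w1 - z 0 =
          (a : ℝ) * (w0 - s) + (b : ℝ) * w1 + ((a : ℝ) * s - z 0) := by ring
      calc |(a : ℝ) * w0 + (b : ℝ) * w1 - z 0| ≤
          |(a : ℝ) * (w0 - s)| + |(b : ℝ) * w1| + |(a : ℝ) * s - z 0| := by
            rw [expand]; exact abs_add_three _ _ _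
        _ ≤ (a : ℝ) * (2 * ε₁) + (b : ℝ) * ε₁ + ε / 4 := by
            have hbw : |(b : ℝ) * w1| = (b : ℝ) * w1 := abs_of_nonneg (mul_nonneg hbR hw1p.le)
            rw [hbw]
            exact add_le_add (add_le_add e1 e2) hzd0
        _ ≤ ε / 4 + ε / 4 := by linarith
        _ < ε := by linarith
    have habs1 : |(c : ℝ) * w0 + (d : ℝ) * w1 - z 1| < ε := by
      have e1 : |(c : ℝ) * (w0 - s)| ≤ (c : ℝ) * (2 * ε₁) := by
        rw [abs_mul, abs_of_nonneg hcR]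
        exact mul_le_mul_of_nonneg_left hw0c hcR
      have e2 : (d : ℝ) * w1 ≤ (d : ℝ) * ε₁ := mul_le_mul_of_nonneg_left hw1l.le hdR
      have e3 : ((c : ℝ) * 2 + (d : ℝ)) * ε₁ ≤ ε / 4 := by
        have h4 : ((c : ℝ) * 2 + (d : ℝ)) ≤ 2 * M := by rw [hM]; linarith
        calc ((c : ℝ) * 2 + (d : ℝ)) * ε₁ ≤ (2 * M) * ε₁ := by nlinarith
          _ ≤ (2 * M) * (ε / (8 * M)) := by nlinarith
          _ = ε / 4 := by field_simp; ring
      have expand : (c : ℝ) * w0 + (d : ℝ) * w1 - z 1 =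
          (c : ℝ) * (w0 - s) + (d : ℝ) * w1 + ((c : ℝ) * s - z 1) := by ring
      calc |(c : ℝ) * w0 + (d : ℝ) * w1 - z 1| ≤
          |(c : ℝ) * (w0 - s)| + |(d : ℝ) * w1| + |(c : ℝ) * s - z 1| := by
            rw [expand]; exact abs_add_three _ _ _
        _ ≤ (c : ℝ) * (2 * ε₁) + (d : ℝ) * ε₁ + ε / 4 := by
            have hdw : |(d : ℝ) * w1| = (d : ℝ) * w1 := abs_of_nonneg (mul_nonneg hdR hw1p.le)
            rw [hdw]
            exact add_le_add (add_le_add e1 e2) hzd1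
        _ ≤ ε / 4 + ε / 4 := by linarith
        _ < ε := by linarith
    intro i
    fin_cases i <;> rw [Real.dist_eq]
    · simpa [hwdef, abs_sub_comm] using habs0
    · simpa [hwdef, abs_sub_comm] using habs1
end
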